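/- Let T be a 3-form on R^7 with the standard G2 structure satisfying the characteristic torsion identity with Lee form θ and scalar λ. Then the full contraction of σ^T with ψ satisfies σ^T_{jabc} ψ_{jabc} = -2||T||² + 12||θ||² + 12λ², where σ^T_{jabc} includes the terms T_{jas}T_{bcs} cyclically, using σ^T(X,Y,Z,V) with orthonormal frame contraction giving σ^T_{jabc}ψ_{jabc} = 3 T_{jas} T_{bcs} ψ_{jabc}. -/

import Mathlib

/-- Kronecker delta on `Fin 7`. -/
def kd (a b : Fin 7) : ℝ := if a = b then 1 else 0

/-- Components of the basis monomial `e_a ∧ e_b ∧ e_c` evaluated on `(e_i, e_j, e_k)`. -/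
def m3 (a b c i j k : Fin 7) : ℝ :=
  Matrix.det !![kd a i, kd a j, kd a k; kd b i, kd b j, kd b k; kd c i, kd c j, kd c k]

/-- Components of the basis monomial `e_a ∧ e_b ∧ e_c ∧ e_d`. -/
def m4 (a b c d i j k l : Fin 7) : ℝ :=
  Matrix.det !![kd a i, kd a j, kd a k, kd a l; kd b i, kd b j, kd b k, kd b l;
                kd c i, kd c j, kd c k, kd c l; kd d i, kd d j, kd d k, kd d l]

/-- Components of the standard `G₂` three-form
`φ = e₁₂₇ + e₁₃₅ - e₁₄₆ - e₂₃₆ - e₂₄₅ + e₃₄₇ + e₅₆₇` on `ℝ⁷`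
(indices shifted to `0,…,6`). -/
def phi3 (i j k : Fin 7) : ℝ :=
  m3 0 1 6 i j k + m3 0 2 4 i j k - m3 0 3 5 i j k - m3 1 2 5 i j k
    - m3 1 3 4 i j k + m3 2 3 6 i j k + m3 4 5 6 i j k

/-- Components of the Hodge dual four-form
`ψ = *φ = e₁₂₃₄ + e₃₄₅₆ + e₁₂₅₆ - e₂₄₆₇ + e₁₃₆₇ + e₂₃₅₇ + e₁₄₅₇`. -/
def psi4 (i j k l : Fin 7) : ℝ :=
  m4 0 1 2 3 i j k l + m4 2 3 4 5 i j k l + m4 0 1 4 5 i j k l - m4 1 3 5 6 i j k l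
    + m4 0 2 5 6 i j k l + m4 1 2 4 6 i j k l + m4 0 3 4 6 i j k l

/-- Components of the 4-form `σ^T = (1/2) Σ_j (e_j⌟T) ∧ (e_j⌟T)`. -/
def sigmaT (T : Fin 7 → Fin 7 → Fin 7 → ℝ) (x y z v : Fin 7) : ℝ :=
  ∑ i : Fin 7, (T i x y * T i z v - T i x z * T i y v + T i x v * T i y z)

set_option maxHeartbeats 1000000 in
private lemma det4 (a b c d e f g h i j k l m n o p : ℝ) :
    Matrix.det !![a,b,c,d;e,f,g,h;i,j,k,l;m,n,o,p] =
      a*(f*(k*p-l*o)-g*(j*p-l*n)+h*(j*o-k*n))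
      - b*(e*(k*p-l*o)-g*(i*p-l*m)+h*(i*o-k*m))
      + c*(e*(j*p-l*n)-f*(i*p-l*m)+h*(i*n-j*m))
      - d*(e*(j*o-k*n)-f*(i*o-k*m)+g*(i*n-j*m)) := by
  simp [Matrix.det_succ_row_zero, Fin.sum_univ_succ, Fin.succAbove,
    Matrix.cons_val_zero, Matrix.cons_val_one, Matrix.head_cons, Matrix.cons_val_succ,
    Fin.castSucc, Fin.castAdd, Fin.castLE]
  ring

set_option maxHeartbeats 1000000 in
private lemma psi_sw23 (i j k l : Fin 7) : psi4 i k j l = -psi4 i j k l := by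
  simp only [psi4, m4, det4]; ring

set_option maxHeartbeats 1000000 in
private lemma psi_cycR (a b c d : Fin 7) : psi4 a d b c = psi4 a b c d := by
  simp only [psi4, m4, det4]; ring

set_option maxHeartbeats 1000000 in
private lemma psi_rot (a b c d : Fin 7) : psi4 a b c d = -psi4 b c d a := by
  simp only [psi4, m4, det4]; ring

private abbrev I5 := Fin 7 × Fin 7 × Fin 7 × Fin 7 × Fin 7
private abbrev I4 := Fin 7 × Fin 7 × Fin 7 × Fin 7

private lemma nest5 (f : Fin 7 → Fin 7 → Fin 7 → Fin 7 → Fin 7 → ℝ) :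
    (∑ a, ∑ b, ∑ c, ∑ d, ∑ e, f a b c d e)
      = ∑ x : I5, f x.1 x.2.1 x.2.2.1 x.2.2.2.1 x.2.2.2.2 := by
  simp [Fintype.sum_prod_type]

private lemma nest4 (f : Fin 7 → Fin 7 → Fin 7 → Fin 7 → ℝ) :
    (∑ a, ∑ b, ∑ c, ∑ d, f a b c d)
      = ∑ x : I4, f x.1 x.2.1 x.2.2.1 x.2.2.2 := by
  simp [Fintype.sum_prod_type]

-- equivs
private def eV : I5 ≃ I5 :=
  ⟨fun x => (x.1, x.2.2.1, x.2.1, x.2.2.2.1, x.2.2.2.2),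
   fun x => (x.1, x.2.2.1, x.2.1, x.2.2.2.1, x.2.2.2.2), fun _ => rfl, fun _ => rfl⟩
private def eW : I5 ≃ I5 :=
  ⟨fun x => (x.1, x.2.2.2.1, x.2.1, x.2.2.1, x.2.2.2.2),
   fun y => (y.1, y.2.2.1, y.2.2.2.1, y.2.1, y.2.2.2.2), fun _ => rfl, fun _ => rfl⟩
private def eA : I5 ≃ I5 :=
  ⟨fun x => (x.2.2.2.1, x.2.2.2.2, x.2.1, x.2.2.1, x.1),
   fun y => (y.2.2.2.2, y.2.2.1, y.2.2.2.1, y.1, y.2.1), fun _ => rfl, fun _ => rfl⟩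
private def eB : I5 ≃ I5 :=
  ⟨fun x => (x.2.2.2.1, x.2.2.2.2, x.1, x.2.2.1, x.2.1),
   fun y => (y.2.2.1, y.2.2.2.2, y.2.2.2.1, y.1, y.2.1), fun _ => rfl, fun _ => rfl⟩
private def eC : I5 ≃ I5 :=
  ⟨fun x => (x.2.2.2.1, x.2.2.2.2, x.1, x.2.1, x.2.2.1),
   fun y => (y.2.2.1, y.2.2.2.1, y.2.2.2.2, y.1, y.2.1), fun _ => rfl, fun _ => rfl⟩
private def eD : I4 ≃ I4 :=
  ⟨fun x => (x.2.2.2, x.1, x.2.1, x.2.2.1),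
   fun y => (y.2.1, y.2.2.1, y.2.2.2, y.1), fun _ => rfl, fun _ => rfl⟩

private lemma sum3_split (c1 c2 c3 c4 c5 : ℝ) (F1 F2 F3 F4 F5 : Fin 7 → Fin 7 → Fin 7 → ℝ) :
    (∑ k : Fin 7, ∑ l : Fin 7, ∑ m : Fin 7,
        (c1 * F1 k l m + c2 * F2 k l m + c3 * F3 k l m + c4 * F4 k l m + c5 * F5 k l m))
      = c1 * (∑ k, ∑ l, ∑ m, F1 k l m) + c2 * (∑ k, ∑ l, ∑ m, F2 k l m)
        + c3 * (∑ k, ∑ l, ∑ m, F3 k l m) + c4 * (∑ k, ∑ l, ∑ m, F4 k l m)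
        + c5 * (∑ k, ∑ l, ∑ m, F5 k l m) := by
  simp only [Finset.sum_add_distrib, ← Finset.mul_sum]

/-- `σ^T_{jabc} ψ_{jabc} = 3 T_{jas} T_{bcs} ψ_{jabc} = -2‖T‖² + 12‖θ‖² + 12λ²`
for the characteristic torsion of an integrable `G₂` structure, where `‖T‖²` denotes the full
tensor contraction `T_{ijk}T_{ijk}`. -/
theorem g2_sigma_psi_contraction
    (T : Fin 7 → Fin 7 → Fin 7 → ℝ) (θ : Fin 7 → ℝ) (lam : ℝ)
    (hT1 : ∀ i j k, T i j k = -T j i k) (hT2 : ∀ i j k, T i j k = -T i k j)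
    (hchar : ∀ k l m : Fin 7,
      T k l m =
        -(1 / 2 : ℝ) * (∑ j : Fin 7, ∑ s : Fin 7, T j s k * psi4 j s l m)
        + (1 / 2 : ℝ) * (∑ j : Fin 7, ∑ s : Fin 7, T j s l * psi4 j s k m)
        - (1 / 2 : ℝ) * (∑ j : Fin 7, ∑ s : Fin 7, T j s m * psi4 j s k l)
        - (∑ s : Fin 7, θ s * psi4 s k l m) + lam * phi3 k l m)
    (hθ : ∀ i : Fin 7, θ i =
      (1 / 6 : ℝ) * (∑ j : Fin 7, ∑ k : Fin 7, ∑ l : Fin 7, T j k l * psi4 j k l i))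
    (hlam : lam = (1 / 6 : ℝ) * (∑ k : Fin 7, ∑ l : Fin 7, ∑ m : Fin 7, T k l m * phi3 k l m)) :
    (∑ j : Fin 7, ∑ a : Fin 7, ∑ b : Fin 7, ∑ c : Fin 7, sigmaT T j a b c * psi4 j a b c =
      3 * ∑ j : Fin 7, ∑ a : Fin 7, ∑ b : Fin 7, ∑ c : Fin 7, ∑ s : Fin 7,
        T j a s * T b c s * psi4 j a b c) ∧
    (∑ j : Fin 7, ∑ a : Fin 7, ∑ b : Fin 7, ∑ c : Fin 7, sigmaT T j a b c * psi4 j a b c =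
      -2 * (∑ i : Fin 7, ∑ j : Fin 7, ∑ k : Fin 7, T i j k * T i j k)
        + 12 * (∑ i : Fin 7, θ i * θ i) + 12 * lam ^ 2) := by
  have hT_cyc : ∀ i j k, T i j k = T j k i := by
    intro i j k
    rw [hT1 i j k, hT2 j i k]; ring
  set fA : I5 → ℝ := fun x => T x.1 x.2.1 x.2.2.2.2 * T x.2.2.1 x.2.2.2.1 x.2.2.2.2 *
      psi4 x.1 x.2.1 x.2.2.1 x.2.2.2.1 with hfA
  set A : ℝ := ∑ x : I5, fA x with hA
  have hAnest : (∑ j : Fin 7, ∑ a : Fin 7, ∑ b : Fin 7, ∑ c : Fin 7, ∑ s : Fin 7,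
      T j a s * T b c s * psi4 j a b c) = A := nest5 _
  -- Part 1
  have hU : (∑ j : Fin 7, ∑ a : Fin 7, ∑ b : Fin 7, ∑ c : Fin 7, ∑ i : Fin 7,
      T i j a * T i b c * psi4 j a b c) = A := by
    rw [nest5]
    exact Finset.sum_congr rfl fun x _ => by
      rw [hT_cyc x.2.2.2.2 x.1 x.2.1, hT_cyc x.2.2.2.2 x.2.2.1 x.2.2.2.1]
  have hV : (∑ j : Fin 7, ∑ a : Fin 7, ∑ b : Fin 7, ∑ c : Fin 7, ∑ i : Fin 7,
      T i j b * T i a c * psi4 j a b c) = -A := by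
    rw [nest5, ← Finset.sum_neg_distrib]
    exact Fintype.sum_equiv eV _ _ fun x => by
      simp only [hfA, eV, Equiv.coe_fn_mk]
      rw [hT_cyc x.2.2.2.2 x.1 x.2.2.1, hT_cyc x.2.2.2.2 x.2.1 x.2.2.2.1,
        psi_sw23 x.1 x.2.1 x.2.2.1 x.2.2.2.1]
      ring
  have hW : (∑ j : Fin 7, ∑ a : Fin 7, ∑ b : Fin 7, ∑ c : Fin 7, ∑ i : Fin 7,
      T i j c * T i a b * psi4 j a b c) = A := by
    rw [nest5]
    exact Fintype.sum_equiv eW _ _ fun x => by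
      simp only [hfA, eW, Equiv.coe_fn_mk]
      rw [hT_cyc x.2.2.2.2 x.1 x.2.2.2.1, hT_cyc x.2.2.2.2 x.2.1 x.2.2.1,
        psi_cycR x.1 x.2.1 x.2.2.1 x.2.2.2.1]
  have g1 : (∑ j : Fin 7, ∑ a : Fin 7, ∑ b : Fin 7, ∑ c : Fin 7,
      sigmaT T j a b c * psi4 j a b c) = 3 * A := by
    calc (∑ j : Fin 7, ∑ a : Fin 7, ∑ b : Fin 7, ∑ c : Fin 7,
        sigmaT T j a b c * psi4 j a b c)
        = (∑ j : Fin 7, ∑ a : Fin 7, ∑ b : Fin 7, ∑ c : Fin 7, ∑ i : Fin 7,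
            T i j a * T i b c * psi4 j a b c)
          - (∑ j : Fin 7, ∑ a : Fin 7, ∑ b : Fin 7, ∑ c : Fin 7, ∑ i : Fin 7,
            T i j b * T i a c * psi4 j a b c)
          + (∑ j : Fin 7, ∑ a : Fin 7, ∑ b : Fin 7, ∑ c : Fin 7, ∑ i : Fin 7,
            T i j c * T i a b * psi4 j a b c) := by
          simp only [sigmaT, Finset.sum_mul, sub_mul, add_mul,
            Finset.sum_add_distrib, Finset.sum_sub_distrib]
      _ = 3 * A := by rw [hU, hV, hW]; ring
  -- Part 2
  have ha : (∑ k : Fin 7, ∑ l : Fin 7, ∑ m : Fin 7,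
      T k l m * (∑ j : Fin 7, ∑ s : Fin 7, T j s k * psi4 j s l m)) = A := by
    simp only [Finset.mul_sum]
    rw [nest5 (fun k l m j s => T k l m * (T j s k * psi4 j s l m))]
    exact Fintype.sum_equiv eA _ _ fun x => by
      simp only [hfA, eA, Equiv.coe_fn_mk]
      rw [hT_cyc x.1 x.2.1 x.2.2.1]
      ring
  have hb : (∑ k : Fin 7, ∑ l : Fin 7, ∑ m : Fin 7,
      T k l m * (∑ j : Fin 7, ∑ s : Fin 7, T j s l * psi4 j s k m)) = -A := by
    simp only [Finset.mul_sum]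
    rw [nest5 (fun k l m j s => T k l m * (T j s l * psi4 j s k m)), ← Finset.sum_neg_distrib]
    exact Fintype.sum_equiv eB _ _ fun x => by
      simp only [hfA, eB, Equiv.coe_fn_mk]
      rw [hT2 x.1 x.2.1 x.2.2.1]
      ring
  have hc : (∑ k : Fin 7, ∑ l : Fin 7, ∑ m : Fin 7,
      T k l m * (∑ j : Fin 7, ∑ s : Fin 7, T j s m * psi4 j s k l)) = A := by
    simp only [Finset.mul_sum]
    rw [nest5 (fun k l m j s => T k l m * (T j s m * psi4 j s k l))]
    exact Fintype.sum_equiv eC _ _ fun x => by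
      simp only [hfA, eC, Equiv.coe_fn_mk]
      ring
  have hd : (∑ k : Fin 7, ∑ l : Fin 7, ∑ m : Fin 7,
      T k l m * (∑ s : Fin 7, θ s * psi4 s k l m)) = -6 * (∑ i : Fin 7, θ i * θ i) := by
    have hd1 : (∑ k : Fin 7, ∑ l : Fin 7, ∑ m : Fin 7,
        T k l m * (∑ s : Fin 7, θ s * psi4 s k l m))
        = ∑ s : Fin 7, θ s * (∑ k : Fin 7, ∑ l : Fin 7, ∑ m : Fin 7,
            T k l m * psi4 s k l m) := by
      simp only [Finset.mul_sum]
      rw [nest4 (fun k l m s => T k l m * (θ s * psi4 s k l m)),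
        nest4 (fun s k l m => θ s * (T k l m * psi4 s k l m))]
      exact Fintype.sum_equiv eD _ _ fun x => by
        simp only [eD, Equiv.coe_fn_mk]; ring
    rw [hd1]
    have hd2 : ∀ s : Fin 7, (∑ k : Fin 7, ∑ l : Fin 7, ∑ m : Fin 7,
        T k l m * psi4 s k l m) = -6 * θ s := by
      intro s
      have : (∑ k : Fin 7, ∑ l : Fin 7, ∑ m : Fin 7, T k l m * psi4 s k l m)
          = -(∑ k : Fin 7, ∑ l : Fin 7, ∑ m : Fin 7, T k l m * psi4 k l m s) := by
        rw [← Finset.sum_neg_distrib]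
        refine Finset.sum_congr rfl fun k _ => ?_
        rw [← Finset.sum_neg_distrib]
        refine Finset.sum_congr rfl fun l _ => ?_
        rw [← Finset.sum_neg_distrib]
        refine Finset.sum_congr rfl fun m _ => ?_
        rw [psi_rot s k l m]; ring
      rw [this]
      have := hθ s
      linarith
    calc (∑ s : Fin 7, θ s * (∑ k : Fin 7, ∑ l : Fin 7, ∑ m : Fin 7,
        T k l m * psi4 s k l m)) = ∑ s : Fin 7, (-6 : ℝ) * (θ s * θ s) := by
          refine Finset.sum_congr rfl fun s _ => ?_
          rw [hd2 s]; ring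
      _ = -6 * (∑ i : Fin 7, θ i * θ i) := by rw [← Finset.mul_sum]
  have he : (∑ k : Fin 7, ∑ l : Fin 7, ∑ m : Fin 7, T k l m * phi3 k l m) = 6 * lam := by
    rw [hlam]; ring
  have h1 : (∑ i : Fin 7, ∑ j : Fin 7, ∑ k : Fin 7, T i j k * T i j k)
      = ∑ k : Fin 7, ∑ l : Fin 7, ∑ m : Fin 7,
        ((-(1/2) : ℝ) * (T k l m * (∑ j : Fin 7, ∑ s : Fin 7, T j s k * psi4 j s l m))
          + (1/2 : ℝ) * (T k l m * (∑ j : Fin 7, ∑ s : Fin 7, T j s l * psi4 j s k m))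
          + (-(1/2) : ℝ) * (T k l m * (∑ j : Fin 7, ∑ s : Fin 7, T j s m * psi4 j s k l))
          + (-1 : ℝ) * (T k l m * (∑ s : Fin 7, θ s * psi4 s k l m))
          + lam * (T k l m * phi3 k l m)) := by
    refine Finset.sum_congr rfl fun k _ => Finset.sum_congr rfl fun l _ =>
      Finset.sum_congr rfl fun m _ => ?_
    linear_combination (T k l m) * hchar k l m
  rw [sum3_split] at h1
  rw [ha, hb, hc, hd, he] at h1
  refine ⟨g1.trans (by rw [hAnest]), ?_⟩
  rw [g1]
  rw [← hAnest] at g1 ⊢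
  rw [hAnest]
  linear_combination 2 * h1
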